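/- The algebra B_q(s,t,φ) is generated as an F-algebra by the elements E, F, K, K⁻¹ alone (C_s and C_t lie in the subalgebra generated by E, F, K^{±1}). -/

import Mathlib

open LaurentPolynomial

noncomputable section

/-- The Laurent polynomial `ψ(c·λ)`. -/
noncomputable def lscale {F : Type*} [Field F] (c : F) (ψ : LaurentPolynomial F) :
    LaurentPolynomial F :=
  Finsupp.sum ψ.coeff fun i a => (a * c ^ i) • (T i : LaurentPolynomial F)

/-- The map `ψ ↦ ψ_{s,t}` of Definition 2.4:
`ψ_{s,t}(λ) = ψ(q⁻¹λ) − (q^{−2s}+q^{−2t})ψ(qλ) + q^{−2s−2t}ψ(q³λ)`. -/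
noncomputable def adu {F : Type*} [Field F] (q : F) (s t : ℤ) (ψ : LaurentPolynomial F) :
    LaurentPolynomial F :=
  lscale q⁻¹ ψ - (q ^ (-2*s) + q ^ (-2*t)) • lscale q ψ + q ^ (-2*s-2*t) • lscale (q^3) ψ

/-- `F[λ,λ⁻¹]_{s,t}`: the span of the monomials `λ^i`, `i ∉ {s,t}`. -/
noncomputable def lstSpan (F : Type*) [Field F] (s t : ℤ) :
    Submodule F (LaurentPolynomial F) :=
  Submodule.span F {ψ : LaurentPolynomial F | ∃ i : ℤ, i ≠ s ∧ i ≠ t ∧ ψ = T i}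

/-- `x^i` for `i : ℤ`, interpreting negative powers via a designated inverse `y`. -/
def zpow2 {B : Type*} [Monoid B] (x y : B) (i : ℤ) : B :=
  if 0 ≤ i then x ^ i.toNat else y ^ (-i).toNat

/-- Evaluation `ψ(c·x)` of a Laurent polynomial `ψ`, where `y` plays the role of `x⁻¹`. -/
noncomputable def leval {F : Type*} [Field F] {B : Type*} [Ring B] [Algebra F B]
    (ψ : LaurentPolynomial F) (c : F) (x y : B) : B :=
  Finsupp.sum ψ.coeff fun i a => (a * c ^ i) • zpow2 x y i

inductive BGen | cs | ct | e | f | k | kinv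
deriving DecidableEq

open FreeAlgebra in
/-- Defining relations for `B_q(s,t,φ)`. -/
inductive BRel {F : Type*} [Field F] (q : F) (s t : ℤ) (φ : LaurentPolynomial F) :
    FreeAlgebra F BGen → FreeAlgebra F BGen → Prop
  | csCentral (x) : BRel q s t φ (ι F BGen.cs * x) (x * ι F BGen.cs)
  | ctCentral (x) : BRel q s t φ (ι F BGen.ct * x) (x * ι F BGen.ct)
  | kkinv : BRel q s t φ (ι F BGen.k * ι F BGen.kinv) 1
  | kinvk : BRel q s t φ (ι F BGen.kinv * ι F BGen.k) 1
  | ke : BRel q s t φ (ι F BGen.k * ι F BGen.e) (q ^ 2 • (ι F BGen.e * ι F BGen.k))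
  | kf : BRel q s t φ (ι F BGen.k * ι F BGen.f) ((q ^ 2)⁻¹ • (ι F BGen.f * ι F BGen.k))
  | fe : BRel q s t φ (ι F BGen.f * ι F BGen.e)
      (q ^ s • (ι F BGen.cs * zpow2 (ι F BGen.k) (ι F BGen.kinv) s)
        + q ^ t • (ι F BGen.ct * zpow2 (ι F BGen.k) (ι F BGen.kinv) t)
        + leval φ q (ι F BGen.k) (ι F BGen.kinv))
  | ef : BRel q s t φ (ι F BGen.e * ι F BGen.f)
      (q ^ (-s) • (ι F BGen.cs * zpow2 (ι F BGen.k) (ι F BGen.kinv) s)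
        + q ^ (-t) • (ι F BGen.ct * zpow2 (ι F BGen.k) (ι F BGen.kinv) t)
        + leval φ q⁻¹ (ι F BGen.k) (ι F BGen.kinv))

/-- The algebra `B_q(s,t,φ)`. -/
def BAlg {F : Type*} [Field F] (q : F) (s t : ℤ) (φ : LaurentPolynomial F) : Type _ :=
  RingQuot (BRel q s t φ)

noncomputable instance {F : Type*} [Field F] (q : F) (s t : ℤ) (φ : LaurentPolynomial F) :
    Ring (BAlg q s t φ) := inferInstanceAs (Ring (RingQuot _))

noncomputable instance {F : Type*} [Field F] (q : F) (s t : ℤ) (φ : LaurentPolynomial F) :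
    Algebra F (BAlg q s t φ) := inferInstanceAs (Algebra F (RingQuot _))

/-- The images of the generators in `B_q(s,t,φ)`. -/
noncomputable def bgen {F : Type*} [Field F] (q : F) (s t : ℤ) (φ : LaurentPolynomial F)
    (g : BGen) : BAlg q s t φ :=
  RingQuot.mkAlgHom F (BRel q s t φ) (FreeAlgebra.ι F g)

section AuxLemmas

variable {F : Type*} [Field F] {B C : Type*} [Ring B] [Ring C] [Algebra F B] [Algebra F C]

lemma map_zpow2 (f : B →ₐ[F] C) (x y : B) (i : ℤ) :
    f (zpow2 x y i) = zpow2 (f x) (f y) i := by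
  unfold zpow2; split <;> simp [map_pow]

lemma map_leval (f : B →ₐ[F] C) (ψ : LaurentPolynomial F) (c : F) (x y : B) :
    f (leval ψ c x y) = leval ψ c (f x) (f y) := by
  unfold _root_.leval
  rw [map_finsuppSum]
  exact Finsupp.sum_congr fun i _ => by rw [map_smul, map_zpow2]

lemma zpow2_unit (u : Bˣ) (i : ℤ) : zpow2 (u : B) (↑u⁻¹) i = ↑(u ^ i) := by
  unfold zpow2
  split
  next h =>
    conv_rhs => rw [← Int.toNat_of_nonneg h, zpow_natCast]
    simp
  next h =>
    conv_rhs => rw [show i = -((-i).toNat : ℤ) by omega, zpow_neg, ← inv_zpow, zpow_natCast]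
    exact (Units.val_pow_eq_pow_val u⁻¹ _).symm

lemma zpow2_mem {A : Subalgebra F B} {x y : B} (hx : x ∈ A) (hy : y ∈ A) (i : ℤ) :
    zpow2 x y i ∈ A := by
  unfold zpow2; split
  · exact pow_mem hx _
  · exact pow_mem hy _

lemma leval_mem {A : Subalgebra F B} {x y : B} (hx : x ∈ A) (hy : y ∈ A)
    (ψ : LaurentPolynomial F) (c : F) : leval ψ c x y ∈ A := by
  unfold _root_.leval Finsupp.sum
  exact Subalgebra.sum_mem _ fun i _ => Subalgebra.smul_mem _ (zpow2_mem hx hy i) _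

end AuxLemmas

theorem stmt9 {F : Type*} [Field F] (q : F) (hq0 : q ≠ 0)
    (hq : ∀ n : ℕ, 0 < n → q ^ n ≠ 1) (s t : ℤ) (hst : s ≠ t)
    (φ : LaurentPolynomial F) (hφ : φ.coeff s = 0 ∧ φ.coeff t = 0) :
    Algebra.adjoin F
      {bgen q s t φ BGen.e, bgen q s t φ BGen.f, bgen q s t φ BGen.k,
        bgen q s t φ BGen.kinv} = ⊤ := by
  set A : Subalgebra F (BAlg q s t φ) := Algebra.adjoin F
      {bgen q s t φ BGen.e, bgen q s t φ BGen.f, bgen q s t φ BGen.k,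
        bgen q s t φ BGen.kinv} with hA
  set EE := bgen q s t φ BGen.e with hEE
  set FF := bgen q s t φ BGen.f with hFF
  set KK := bgen q s t φ BGen.k with hKK
  set KI := bgen q s t φ BGen.kinv with hKI
  set CS := bgen q s t φ BGen.cs with hCS
  set CT := bgen q s t φ BGen.ct with hCT
  have hEA : EE ∈ A := Algebra.subset_adjoin (Set.mem_insert _ _)
  have hFA : FF ∈ A := Algebra.subset_adjoin (Set.mem_insert_of_mem _ (Set.mem_insert _ _))
  have hKA : KK ∈ A := Algebra.subset_adjoin
    (Set.mem_insert_of_mem _ (Set.mem_insert_of_mem _ (Set.mem_insert _ _)))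
  have hKIA : KI ∈ A := Algebra.subset_adjoin
    (Set.mem_insert_of_mem _ (Set.mem_insert_of_mem _ (Set.mem_insert_of_mem _ (Set.mem_singleton _))))
  -- relations in the quotient
  have hk : KK * KI = 1 := by
    have := RingQuot.mkAlgHom_rel F (BRel.kkinv (q := q) (s := s) (t := t) (φ := φ))
    simp only [map_mul, map_one] at this; exact this
  have hki : KI * KK = 1 := by
    have := RingQuot.mkAlgHom_rel F (BRel.kinvk (q := q) (s := s) (t := t) (φ := φ))
    simp only [map_mul, map_one] at this; exact this
  have hFE : FF * EE = q ^ s • (CS * zpow2 KK KI s) + q ^ t • (CT * zpow2 KK KI t)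
      + leval φ q KK KI := by
    have := RingQuot.mkAlgHom_rel F (BRel.fe (q := q) (s := s) (t := t) (φ := φ))
    simp only [map_add, map_smul, map_mul, map_zpow2, map_leval] at this; exact this
  have hEF : EE * FF = q ^ (-s) • (CS * zpow2 KK KI s) + q ^ (-t) • (CT * zpow2 KK KI t)
      + leval φ q⁻¹ KK KI := by
    have := RingQuot.mkAlgHom_rel F (BRel.ef (q := q) (s := s) (t := t) (φ := φ))
    simp only [map_add, map_smul, map_mul, map_zpow2, map_leval] at this; exact this
  -- nonvanishing of the determinant
  have key : ∀ m : ℤ, m ≠ 0 → q ^ m ≠ 1 := by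
    intro m hm h1
    apply hq m.natAbs (by omega)
    have h2 : q ^ (m.natAbs : ℤ) = 1 := by
      rcases Int.natAbs_eq m with h | h
      · rw [← h]; exact h1
      · rw [show (m.natAbs : ℤ) = -m by omega, zpow_neg, h1, inv_one]
    rw [zpow_natCast] at h2; exact h2
  have hzadd : ∀ a b : ℤ, q ^ (a + b) = q ^ a * q ^ b := fun a b => zpow_add₀ hq0 a b
  have hd : q ^ (s - t) - q ^ (t - s) ≠ 0 := by
    refine sub_ne_zero.mpr fun h => key (2 * (s - t)) (by omega) ?_
    calc q ^ (2 * (s - t)) = q ^ (s - t) * q ^ (s - t) := by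
          rw [← hzadd]; congr 1 <;> ring
      _ = q ^ (s - t) * q ^ (t - s) := by rw [h]
      _ = 1 := by rw [← hzadd]; simp
  -- scalar identities
  have hq1 : q ^ (-t) * q ^ s = q ^ (s - t) := by rw [← hzadd]; congr 1 <;> ring
  have hq2 : q ^ (-t) * q ^ t = 1 := by rw [← hzadd]; simp
  have hq3 : q ^ t * q ^ (-s) = q ^ (t - s) := by rw [← hzadd]; congr 1 <;> ring
  have hq4 : q ^ t * q ^ (-t) = 1 := by rw [← hzadd]; simp
  have hq1' : q ^ (-s) * q ^ t = q ^ (t - s) := by rw [← hzadd]; congr 1 <;> ring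
  have hq2' : q ^ (-s) * q ^ s = 1 := by rw [← hzadd]; simp
  have hq3' : q ^ s * q ^ (-t) = q ^ (s - t) := by rw [← hzadd]; congr 1 <;> ring
  have hq4' : q ^ s * q ^ (-s) = 1 := by rw [← hzadd]; simp
  set Xs := CS * zpow2 KK KI s with hXsdef
  set Xt := CT * zpow2 KK KI t with hXtdef
  set Lq := leval φ q KK KI with hLq
  set Lq' := leval φ q⁻¹ KK KI with hLq'
  have hLqA : Lq ∈ A := leval_mem hKA hKIA φ q
  have hLq'A : Lq' ∈ A := leval_mem hKA hKIA φ q⁻¹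
  -- recover CS * K^s and CT * K^t
  have hcombS : q ^ (-t) • (FF * EE - Lq) - q ^ t • (EE * FF - Lq')
      = (q ^ (s - t) - q ^ (t - s)) • Xs := by
    rw [hFE, hEF, add_sub_cancel_right, add_sub_cancel_right, smul_add, smul_add,
      smul_smul, smul_smul, smul_smul, smul_smul, hq1, hq2, hq3, hq4, one_smul, sub_smul]
    abel
  have hcombT : q ^ (-s) • (FF * EE - Lq) - q ^ s • (EE * FF - Lq')
      = (q ^ (t - s) - q ^ (s - t)) • Xt := by
    rw [hFE, hEF, add_sub_cancel_right, add_sub_cancel_right, smul_add, smul_add,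
      smul_smul, smul_smul, smul_smul, smul_smul, hq1', hq2', hq3', hq4', one_smul, sub_smul]
    abel
  have hXsA : Xs ∈ A := by
    have : Xs = (q ^ (s - t) - q ^ (t - s))⁻¹
        • (q ^ (-t) • (FF * EE - Lq) - q ^ t • (EE * FF - Lq')) := by
      rw [hcombS, smul_smul, inv_mul_cancel₀ hd, one_smul]
    rw [this]
    exact A.smul_mem (A.sub_mem (A.smul_mem (A.sub_mem (A.mul_mem hFA hEA) hLqA) _)
      (A.smul_mem (A.sub_mem (A.mul_mem hEA hFA) hLq'A) _)) _
  have hd' : q ^ (t - s) - q ^ (s - t) ≠ 0 := by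
    intro h; exact hd (by linear_combination -h)
  have hXtA : Xt ∈ A := by
    have : Xt = (q ^ (t - s) - q ^ (s - t))⁻¹
        • (q ^ (-s) • (FF * EE - Lq) - q ^ s • (EE * FF - Lq')) := by
      rw [hcombT, smul_smul, inv_mul_cancel₀ hd', one_smul]
    rw [this]
    exact A.smul_mem (A.sub_mem (A.smul_mem (A.sub_mem (A.mul_mem hFA hEA) hLqA) _)
      (A.smul_mem (A.sub_mem (A.mul_mem hEA hFA) hLq'A) _)) _
  -- kill the K powers
  set u : (BAlg q s t φ)ˣ := ⟨KK, KI, hk, hki⟩ with hu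
  have hz1 : ∀ i : ℤ, zpow2 KK KI i = ↑(u ^ i) := fun i => zpow2_unit u i
  have hcancel : ∀ i : ℤ, zpow2 KK KI i * zpow2 KK KI (-i) = 1 := by
    intro i
    rw [hz1, hz1, ← Units.val_mul, ← zpow_add, add_neg_cancel, zpow_zero, Units.val_one]
  have hCSA : CS ∈ A := by
    have : CS = Xs * zpow2 KK KI (-s) := by
      rw [hXsdef, mul_assoc, hcancel, mul_one]
    rw [this]
    exact A.mul_mem hXsA (zpow2_mem hKA hKIA _)
  have hCTA : CT ∈ A := by
    have : CT = Xt * zpow2 KK KI (-t) := by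
      rw [hXtdef, mul_assoc, hcancel, mul_one]
    rw [this]
    exact A.mul_mem hXtA (zpow2_mem hKA hKIA _)
  -- conclude
  rw [eq_top_iff]
  rintro x -
  obtain ⟨y, rfl⟩ := RingQuot.mkAlgHom_surjective F (BRel q s t φ) x
  induction y using FreeAlgebra.induction with
  | grade0 r => rw [AlgHom.commutes]; exact A.algebraMap_mem r
  | grade1 g =>
    cases g with
    | cs => exact hCSA
    | ct => exact hCTA
    | e => exact hEA
    | f => exact hFA
    | k => exact hKA
    | kinv => exact hKIA
  | mul a b ha hb => rw [map_mul]; exact A.mul_mem ha hb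
  | add a b ha hb => rw [map_add]; exact A.add_mem ha hb

end
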